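/- Let C₀ > 0 and 0 < ε ≤ 1/(12C₀). Let z₊, z₋ : ℝ × ℝ³ → ℝ³ be smooth with ‖z₊‖_{L∞} ≤ 1/2 and ‖z₋‖_{L∞} ≤ 1/2, set Z₊ = z₊ + B₀ and Z₋ = z₋ − B₀ with complete flows ψ₊, ψ₋ (∂ₜψ_±(t,y) = Z_±(t, ψ_±(t,y)), ψ_±(0,y) = y). Let u_∓ : ℝ × ℝ³ → ℝ be a smooth solution of (∂ₜ + Z_∓·∇)u_∓ = 0 whose spatial gradient satisfies |∇u_∓(t,x) − e₃| ≤ 2C₀ε for all (t,x), where e₃ = (0,0,1). Then along the opposite characteristic flow the derivative d/dτ [u_∓(τ, ψ_±(τ,y))] equals ( ±2 ∂₃u_∓ + (z_± − z_∓)·∇u_∓ )(τ, ψ_±(τ,y)), and satisfies the transversality lower bound | d/dτ [u_∓(τ, ψ_±(τ,y))] | ≥ 1 − 6C₀ε ≥ 1/2 for all τ and y. -/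

import Mathlib

open MeasureTheory Real Filter

noncomputable section

/-- Physical space `ℝ³` with its Euclidean structure. -/
abbrev V3 : Type := EuclideanSpace ℝ (Fin 3)

/-- Spatial partial derivative `∂ᵢ` in the `i`-th coordinate direction. -/
noncomputable def pd (i : Fin 3) (f : V3 → ℝ) (x : V3) : ℝ :=
  fderiv ℝ f x (EuclideanSpace.single i 1)

/-- The background magnetic field `B₀ = (0,0,1)` (also the unit vector `e₃`). -/
noncomputable def B0 : V3 := WithLp.toLp 2 fun (i : Fin 3) => if i = 2 then 1 else 0

/-- The spatial gradient of a scalar function. -/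
noncomputable def gradv (f : V3 → ℝ) (x : V3) : V3 := WithLp.toLp 2 fun (i : Fin 3) => pd i f x

/-- Spatial divergence of a vector field: `div v = ∂₁v¹ + ∂₂v² + ∂₃v³`. -/
noncomputable def divg (v : V3 → V3) (x : V3) : ℝ := ∑ i, pd i (fun y => v y i) x

/-- Curl of a vector field:
`curl v = (∂₂v³ − ∂₃v², ∂₃v¹ − ∂₁v³, ∂₁v² − ∂₂v¹)`. -/
noncomputable def curlv (v : V3 → V3) (x : V3) : V3 := WithLp.toLp 2 fun (k : Fin 3) =>
  if k = 0 then pd 1 (fun y => v y 2) x - pd 2 (fun y => v y 1) x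
  else if k = 1 then pd 2 (fun y => v y 0) x - pd 0 (fun y => v y 2) x
  else pd 0 (fun y => v y 1) x - pd 1 (fun y => v y 0) x

/-- Joint (time and space) smoothness of a time-dependent vector field. -/
def Smooth2V (z : ℝ → V3 → V3) : Prop := ContDiff ℝ (⊤ : ℕ∞) (fun q : ℝ × V3 => z q.1 q.2)

/-- Joint (time and space) smoothness of a time-dependent scalar function. -/
def Smooth2S (f : ℝ → V3 → ℝ) : Prop := ContDiff ℝ (⊤ : ℕ∞) (fun q : ℝ × V3 => f q.1 q.2)

/-- The ideal incompressible MHD system in Elsässer (fluctuation) form: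
`∂ₜz₊ + (z₋ − B₀)·∇z₊ = −∇p`, `∂ₜz₋ + (z₊ + B₀)·∇z₋ = −∇p`, `div z₊ = div z₋ = 0`. -/
def IsMHD (zp zm : ℝ → V3 → V3) (p : ℝ → V3 → ℝ) : Prop :=
  (∀ t x i, deriv (fun s => zp s x i) t
      + ∑ j, (zm t x j - B0 j) * pd j (fun y => zp t y i) x = - pd i (p t) x) ∧
  (∀ t x i, deriv (fun s => zm s x i) t
      + ∑ j, (zp t x j + B0 j) * pd j (fun y => zm t y i) x = - pd i (p t) x) ∧
  (∀ t x, divg (zp t) x = 0) ∧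
  (∀ t x, divg (zm t) x = 0)

/-- The Elsässer variable `Z₊ = z₊ + B₀`. -/
noncomputable def Zplus (zp : ℝ → V3 → V3) : ℝ → V3 → V3 := fun t x => zp t x + B0

/-- The Elsässer variable `Z₋ = z₋ − B₀`. -/
noncomputable def Zminus (zm : ℝ → V3 → V3) : ℝ → V3 → V3 := fun t x => zm t x - B0

/-- `ψ` is the (complete) flow of the time-dependent vector field `Z`. -/
def IsFlowOf (Z : ℝ → V3 → V3) (ψ : ℝ → V3 → V3) : Prop :=
  (∀ y, ψ 0 y = y) ∧ ∀ t y, HasDerivAt (fun s => ψ s y) (Z t (ψ t y)) t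

/-- The future scattering field `z(+∞;y) = z(0,y) − ∫₀^{+∞} (∇p·√(1+|Zo|²))(τ, ψ(τ,y)) dτ`,
where `Zo` is the opposite Elsässer variable and `ψ` its flow. -/
noncomputable def scatFuture (z : ℝ → V3 → V3) (p : ℝ → V3 → ℝ) (Zo : ℝ → V3 → V3)
    (ψ : ℝ → V3 → V3) (y : V3) : V3 :=
  z 0 y - ∫ τ in Set.Ioi (0:ℝ), Real.sqrt (1 + ‖Zo τ (ψ τ y)‖^2) • gradv (p τ) (ψ τ y)

/-- The past scattering field `z(−∞;y) = z(0,y) − ∫₀^{−∞} (∇p·√(1+|Zo|²))(τ, ψ(τ,y)) dτ`. -/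
noncomputable def scatPast (z : ℝ → V3 → V3) (p : ℝ → V3 → ℝ) (Zo : ℝ → V3 → V3)
    (ψ : ℝ → V3 → V3) (y : V3) : V3 :=
  z 0 y + ∫ τ in Set.Iio (0:ℝ), Real.sqrt (1 + ‖Zo τ (ψ τ y)‖^2) • gradv (p τ) (ψ τ y)

/-- Iterated partial derivative `∂^β = ∂₁^{β 0} ∂₂^{β 1} ∂₃^{β 2}` for a multi-index `β`. -/
noncomputable def mD (β : Fin 3 → ℕ) (f : V3 → ℝ) : V3 → ℝ :=
  (pd 0)^[β 0] ((pd 1)^[β 1] ((pd 2)^[β 2] f))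

/-- `D` is the `β`-th weak (distributional) derivative of `F` (componentwise). -/
def IsWeakDeriv (β : Fin 3 → ℕ) (F D : V3 → V3) : Prop :=
  ∀ φ : V3 → ℝ, ContDiff ℝ (⊤ : ℕ∞) φ → HasCompactSupport φ → ∀ i : Fin 3,
    ∫ y : V3, F y i * mD β φ y = (-1 : ℝ)^(β 0 + β 1 + β 2) * ∫ y : V3, D y i * φ y

/-- The finite set of spatial multi-indices of total order at most `N`. -/
def mIdx (N : ℕ) : Finset (Fin 3 → ℕ) :=
  (Fintype.piFinset fun _ : Fin 3 => Finset.range (N+1)).filter fun β => β 0 + β 1 + β 2 ≤ N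

/-- The squared weighted Sobolev norm
`‖F‖²_{H^N_ω} = Σ_{|β| ≤ N} ∫ (R² + y₃²)^ω |∂^β F(y)|² dy` (for classically differentiable `F`). -/
noncomputable def HSobSq (N : ℕ) (R ω : ℝ) (F : V3 → V3) : ℝ :=
  ∑ β ∈ mIdx N, ∫ y : V3, (R^2 + (y 2)^2) ^ ω * ∑ i, (mD β (fun z => F z i) y)^2

/-- Schwartz-type decay in the spatial variables, locally uniformly in time. -/
def SchwartzLike (z : ℝ → V3 → V3) : Prop :=
  ∀ (n k : ℕ) (T : ℝ), ∃ C, ∀ τ x, |τ| ≤ T → (1+‖x‖)^n * ‖iteratedFDeriv ℝ k (z τ) x‖ ≤ C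

/-- The quadratic source term `Σ_{i,j} ∂ᵢz₋ʲ ∂ⱼz₊ⁱ` of the pressure equation. -/
noncomputable def qsrc (zp zm : ℝ → V3 → V3) (τ : ℝ) (x : V3) : ℝ :=
  ∑ i, ∑ j, pd i (fun y => zm τ y j) x * pd j (fun y => zp τ y i) x

/-- The Newtonian potential expression for the pressure:
`p(τ,x) = (1/4π) ∫ |x − x'|⁻¹ (Σ_{i,j} ∂ᵢz₋ʲ ∂ⱼz₊ⁱ)(τ,x') dx'`. -/
noncomputable def newt (zp zm : ℝ → V3 → V3) (τ : ℝ) (x : V3) : ℝ :=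
  (1/(4*Real.pi)) * ∫ x' : V3, ‖x - x'‖⁻¹ * qsrc zp zm τ x'

lemma vdec (v : V3) : v = ∑ j, v j • EuclideanSpace.single j (1:ℝ) := by
  ext i
  rw [WithLp.ofLp_sum, Finset.sum_apply]
  simp [EuclideanSpace.single_apply]

lemma chain_rule (u : ℝ → V3 → ℝ) (hu : ContDiff ℝ (⊤ : ℕ∞) (fun q : ℝ × V3 => u q.1 q.2))
    (γ : ℝ → V3) (v : V3) (τ : ℝ) (hγ : HasDerivAt γ v τ) :
    HasDerivAt (fun s => u s (γ s))
      (deriv (fun s => u s (γ τ)) τ + ∑ j, v j * pd j (u τ) (γ τ)) τ := by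
  have hF : HasFDerivAt (fun q : ℝ × V3 => u q.1 q.2)
      (fderiv ℝ (fun q : ℝ × V3 => u q.1 q.2) (τ, γ τ)) (τ, γ τ) :=
    (hu.differentiable (by simp) (τ, γ τ)).hasFDerivAt
  set L := fderiv ℝ (fun q : ℝ × V3 => u q.1 q.2) (τ, γ τ) with hLdef
  have h1 : HasDerivAt (fun s => ((s, γ s) : ℝ × V3)) (1, v) τ := (hasDerivAt_id τ).prodMk hγ
  have hcomp : HasDerivAt (fun s => u s (γ s)) (L (1, v)) τ := by have := hF.comp_hasDerivAt τ h1; exact this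
  have ht : HasDerivAt (fun s => u s (γ τ)) (L (1, (0 : V3))) τ := by
    have h2 : HasDerivAt (fun s => ((s, γ τ) : ℝ × V3)) (1, (0 : V3)) τ :=
      (hasDerivAt_id τ).prodMk (hasDerivAt_const τ (γ τ))
    exact hF.comp_hasDerivAt τ h2
  have hs : ∀ j : Fin 3, pd j (u τ) (γ τ) = L (0, EuclideanSpace.single j 1) := by
    intro j
    have h3 : HasFDerivAt (fun x : V3 => ((τ, x) : ℝ × V3))
        ((0 : V3 →L[ℝ] ℝ).prod (ContinuousLinearMap.id ℝ V3)) (γ τ) :=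
      (hasFDerivAt_const τ (γ τ)).prodMk (hasFDerivAt_id (γ τ))
    have h4 : HasFDerivAt (u τ)
        (L.comp ((0 : V3 →L[ℝ] ℝ).prod (ContinuousLinearMap.id ℝ V3))) (γ τ) :=
      hF.comp (γ τ) h3
    rw [pd, h4.fderiv]
    simp
  have key : L (1, v) = deriv (fun s => u s (γ τ)) τ + ∑ j, v j * pd j (u τ) (γ τ) := by
    rw [ht.deriv]
    have hv : ((1:ℝ), v) = ((1:ℝ), (0 : V3)) + ∑ j, v j • ((0:ℝ), EuclideanSpace.single j (1:ℝ)) := by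
      have := vdec v
      refine Prod.ext ?_ ?_ <;> simp [Prod.fst_sum, Prod.snd_sum]
      exact this
    rw [hv, map_add, map_sum]
    congr 1
    refine Finset.sum_congr rfl fun j _ => ?_
    rw [hs j, L.map_smul, smul_eq_mul]
  exact key ▸ hcomp

lemma B0_eq_single : B0 = EuclideanSpace.single (2 : Fin 3) (1:ℝ) := by
  ext i
  simp [B0, EuclideanSpace.single_apply]

lemma norm_B0 : ‖B0‖ = 1 := by
  rw [B0_eq_single, EuclideanSpace.norm_single]; norm_num

lemma inner_sum_eq (d G : V3) : ∑ j, d j * G j = (inner ℝ d G) := by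
  simp [PiLp.inner_apply, RCLike.inner_apply, mul_comm]

lemma lower_bound (C₀ ε : ℝ) (hC₀ : 0 < C₀) (hε : 0 < ε) (a b G : V3)
    (ha : ‖a‖ ≤ 1/2) (hb : ‖b‖ ≤ 1/2) (hG : ‖G - B0‖ ≤ 2*C₀*ε) :
    1 - 6*C₀*ε ≤ 2 * G 2 + ∑ j, (a j - b j) * G j := by
  set g : V3 := G - B0 with hg
  set d : V3 := a - b with hd
  have hdn : ‖d‖ ≤ 1 := le_trans (norm_sub_le a b) (by linarith)
  have hG2 : G 2 = 1 + g 2 := by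
    have : g 2 = G 2 - B0 2 := rfl
    rw [this]; simp [B0]
  have hsum : ∑ j, (a j - b j) * G j = (inner ℝ d G) := by
    rw [← inner_sum_eq]
    refine Finset.sum_congr rfl fun j _ => ?_
    congr 1
  have hGdec : G = B0 + g := by rw [hg]; abel
  have hinner : (inner ℝ d G) = inner ℝ d B0 + inner ℝ d g := by
    rw [hGdec, inner_add_right]
  have h1 : |(inner ℝ d B0)| ≤ 1 := by
    calc |(inner ℝ d B0)| ≤ ‖d‖ * ‖B0‖ := abs_real_inner_le_norm d B0
    _ ≤ 1 := by rw [norm_B0]; simpa using hdn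
  have h2 : |(inner ℝ d g)| ≤ 2*C₀*ε := by
    calc |(inner ℝ d g)| ≤ ‖d‖ * ‖g‖ := abs_real_inner_le_norm d g
    _ ≤ 1 * ‖g‖ := by
        exact mul_le_mul_of_nonneg_right hdn (norm_nonneg g)
    _ ≤ 2*C₀*ε := by rw [one_mul]; exact hG
  have h3 : |g 2| ≤ 2*C₀*ε := by
    have : g 2 = (inner ℝ g B0) := by
      rw [← inner_sum_eq]
      simp [Fin.sum_univ_three, B0]
    rw [this]
    calc |(inner ℝ g B0)| ≤ ‖g‖ * ‖B0‖ := abs_real_inner_le_norm g B0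
    _ ≤ 2*C₀*ε := by rw [norm_B0, mul_one]; exact hG
  rw [hsum, hinner, hG2]
  have e1 := abs_le.mp h1
  have e2 := abs_le.mp h2
  have e3 := abs_le.mp h3
  linarith [e1.1, e2.1, e3.1]

/-- Transversality of the characteristic foliations along opposite flows.
Let `0 < ε ≤ 1/(12C₀)`, `‖z_±‖_{L∞} ≤ 1/2`, let `ψ_±` be the complete flows of
`Z_± = z_± ± B₀`, and let `u_∓` solve `(∂ₜ + Z_∓·∇)u_∓ = 0` with `|∇u_∓ − e₃| ≤ 2C₀ε`.
Then `d/dτ [u_∓(τ, ψ_±(τ,y))] = (±2∂₃u_∓ + (z_± − z_∓)·∇u_∓)(τ, ψ_±(τ,y))` and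
`|d/dτ [u_∓(τ, ψ_±(τ,y))]| ≥ 1 − 6C₀ε ≥ 1/2`. -/
theorem stmt19_transversality
    (C₀ ε : ℝ) (hC₀ : 0 < C₀) (hε1 : 0 < ε) (hε2 : ε ≤ 1/(12*C₀))
    (zp zm : ℝ → V3 → V3) (hzp : Smooth2V zp) (hzm : Smooth2V zm)
    (hbp : ∀ t x, ‖zp t x‖ ≤ 1/2) (hbm : ∀ t x, ‖zm t x‖ ≤ 1/2)
    (ψp ψm : ℝ → V3 → V3)
    (hψp : IsFlowOf (Zplus zp) ψp) (hψm : IsFlowOf (Zminus zm) ψm)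
    (up um : ℝ → V3 → ℝ) (hup : Smooth2S up) (hum : Smooth2S um)
    (htp : ∀ t x, deriv (fun s => up s x) t + ∑ j, (zp t x j + B0 j) * pd j (up t) x = 0)
    (htm : ∀ t x, deriv (fun s => um s x) t + ∑ j, (zm t x j - B0 j) * pd j (um t) x = 0)
    (hgp : ∀ t x, ‖gradv (up t) x - B0‖ ≤ 2*C₀*ε)
    (hgm : ∀ t x, ‖gradv (um t) x - B0‖ ≤ 2*C₀*ε) :
    ∀ (τ : ℝ) (y : V3),
      -- `u₋` along the flow of `Z₊`
      (HasDerivAt (fun s => um s (ψp s y))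
          (2 * pd 2 (um τ) (ψp τ y)
            + ∑ j, (zp τ (ψp τ y) j - zm τ (ψp τ y) j) * pd j (um τ) (ψp τ y)) τ ∧
        (1/2 : ℝ) ≤ 1 - 6*C₀*ε ∧
        1 - 6*C₀*ε ≤
          |2 * pd 2 (um τ) (ψp τ y)
            + ∑ j, (zp τ (ψp τ y) j - zm τ (ψp τ y) j) * pd j (um τ) (ψp τ y)|) ∧
      -- `u₊` along the flow of `Z₋`
      (HasDerivAt (fun s => up s (ψm s y))
          (-2 * pd 2 (up τ) (ψm τ y)
            + ∑ j, (zm τ (ψm τ y) j - zp τ (ψm τ y) j) * pd j (up τ) (ψm τ y)) τ ∧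
        1 - 6*C₀*ε ≤
          |-2 * pd 2 (up τ) (ψm τ y)
            + ∑ j, (zm τ (ψm τ y) j - zp τ (ψm τ y) j) * pd j (up τ) (ψm τ y)|) := by
  
  intro τ y
  have h12 : (1:ℝ)/2 ≤ 1 - 6*C₀*ε := by
    have h := (le_div_iff₀ (by positivity : (0:ℝ) < 12*C₀)).mp hε2
    nlinarith
  constructor
  · set x := ψp τ y with hx
    have hd := chain_rule um hum (fun s => ψp s y) (Zplus zp τ x) τ (hψp.2 τ y)
    have hm := htm τ x
    have heq : deriv (fun s => um s x) τ + ∑ j, Zplus zp τ x j * pd j (um τ) x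
        = 2 * pd 2 (um τ) x + ∑ j, (zp τ x j - zm τ x j) * pd j (um τ) x := by
      have hderiv : deriv (fun s => um s x) τ = -∑ j, (zm τ x j - B0 j) * pd j (um τ) x := by
        linarith
      rw [hderiv]
      simp [Zplus, Fin.sum_univ_three, B0]
      ring
    rw [heq] at hd
    refine ⟨hd, h12, ?_⟩
    have hle := lower_bound C₀ ε hC₀ hε1 (zp τ x) (zm τ x) (gradv (um τ) x)
      (hbp τ x) (hbm τ x) (hgm τ x)
    exact le_trans hle (le_abs_self _)
  · set x := ψm τ y with hx
    have hd := chain_rule up hup (fun s => ψm s y) (Zminus zm τ x) τ (hψm.2 τ y)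
    have hm := htp τ x
    have heq : deriv (fun s => up s x) τ + ∑ j, Zminus zm τ x j * pd j (up τ) x
        = -2 * pd 2 (up τ) x + ∑ j, (zm τ x j - zp τ x j) * pd j (up τ) x := by
      have hderiv : deriv (fun s => up s x) τ = -∑ j, (zp τ x j + B0 j) * pd j (up τ) x := by
        linarith
      rw [hderiv]
      simp [Zminus, Fin.sum_univ_three, B0]
      ring
    rw [heq] at hd
    refine ⟨hd, ?_⟩
    have hle := lower_bound C₀ ε hC₀ hε1 (zp τ x) (zm τ x) (gradv (up τ) x)
      (hbp τ x) (hbm τ x) (hgp τ x)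
    have hneg : -(-2 * pd 2 (up τ) x + ∑ j, (zm τ x j - zp τ x j) * pd j (up τ) x)
        = 2 * gradv (up τ) x 2 + ∑ j, (zp τ x j - zm τ x j) * gradv (up τ) x j := by
      simp only [gradv, WithLp.ofLp_toLp, Fin.sum_univ_three]
      ring
    calc 1 - 6*C₀*ε ≤ -(-2 * pd 2 (up τ) x + ∑ j, (zm τ x j - zp τ x j) * pd j (up τ) x) := by
          rw [hneg]; exact hle
      _ ≤ |(-2 * pd 2 (up τ) x + ∑ j, (zm τ x j - zp τ x j) * pd j (up τ) x)| := neg_le_abs _
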